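/- For every real c > 0, the ratio C(n, ⌊n/2 + (c/2)√n⌋) / C(n, ⌊n/2⌋) converges to exp(−c²/2) as n → ∞. -/

import Mathlib

open Filter Real Nat

section Aux

lemma choose_prod_formula (n m : ℕ) : ∀ k : ℕ, m ≤ k → k ≤ n →
    (n.choose k : ℝ) = n.choose m * ∏ j ∈ Finset.Ioc m k, ((n:ℝ)+1-j)/j := by
  intro k hmk
  induction k, hmk using Nat.le_induction with
  | base => intro _; simp
  | succ k hk ih =>
    intro hkn
    have hkn' : k ≤ n := by omega
    rw [Finset.prod_Ioc_succ_top hk, ← mul_assoc, ← ih hkn']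
    have hcast : ((n - k : ℕ) : ℝ) = (n:ℝ) - k := by
      push_cast [Nat.cast_sub hkn']; ring
    have h2 : (n.choose (k+1) : ℝ) * (k+1) = n.choose k * ((n:ℝ) - k) := by
      rw [← hcast]; exact_mod_cast Nat.choose_succ_right_eq n k
    have hk1 : ((k:ℝ)+1) ≠ 0 := by positivity
    field_simp
    push_cast; nlinarith [h2]

lemma sum_T (n m : ℕ) : ∀ k : ℕ, m ≤ k →
    ∑ j ∈ Finset.Ioc m k, (2*(j:ℝ) - n - 1) = ((k:ℝ) - m) * ((k:ℝ) + m - n) := by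
  intro k hmk
  induction k, hmk using Nat.le_induction with
  | base => simp
  | succ k hk ih =>
    rw [Finset.sum_Ioc_succ_top hk, ih]
    push_cast; ring

lemma one_sub_inv_le_log {x : ℝ} (hx : 0 < x) : 1 - 1/x ≤ Real.log x := by
  have h := Real.log_le_sub_one_of_pos (x := 1/x) (by positivity)
  rw [one_div, Real.log_inv] at h
  rw [one_div]
  linarith

noncomputable def bK (c : ℝ) (n : ℕ) : ℕ := ⌊(n:ℝ)/2 + (c/2)*Real.sqrt n⌋₊
noncomputable def bD (c : ℝ) (n : ℕ) : ℝ := (bK c n : ℝ) - ((n/2 : ℕ) : ℝ)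
noncomputable def bE (n : ℕ) : ℝ := (n:ℝ) - 2*((n/2:ℕ):ℝ)
noncomputable def bT (c : ℝ) (n : ℕ) : ℝ := bD c n * (bD c n - bE n)
noncomputable def bS (c : ℝ) (n : ℕ) : ℝ :=
  ∑ j ∈ Finset.Ioc (n/2) (bK c n), Real.log (((n:ℝ)+1-j)/j)

lemma inv_sqrt_tendsto : Filter.Tendsto (fun n : ℕ => 1 / Real.sqrt n) atTop (nhds 0) := by
  have h1 : Filter.Tendsto (fun n : ℕ => (1:ℝ) / n) atTop (nhds 0) :=
    tendsto_one_div_atTop_nhds_zero_nat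
  have h2 := (Real.continuous_sqrt.tendsto 0).comp h1
  simp only [Real.sqrt_zero] at h2
  refine h2.congr fun n => ?_
  simp [one_div, Real.sqrt_inv]

lemma bM_le (n : ℕ) : ((n/2 : ℕ) : ℝ) ≤ (n:ℝ)/2 ∧ (n:ℝ)/2 - 1/2 ≤ ((n/2:ℕ):ℝ) := by
  have h1 : 2*(n/2) ≤ n := by omega
  have h2 : n ≤ 2*(n/2) + 1 := by omega
  constructor <;> [skip; skip] <;>
  · have := (Nat.cast_le (α := ℝ)).2 h1
    have := (Nat.cast_le (α := ℝ)).2 h2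
    push_cast at *
    linarith

lemma bK_bounds (c : ℝ) (hc : 0 < c) (n : ℕ) :
    (n:ℝ)/2 + (c/2)*Real.sqrt n - 1 < (bK c n : ℝ) ∧
    (bK c n : ℝ) ≤ (n:ℝ)/2 + (c/2)*Real.sqrt n := by
  have hx : (0:ℝ) ≤ (n:ℝ)/2 + (c/2)*Real.sqrt n := by positivity
  exact ⟨Nat.sub_one_lt_floor _, Nat.floor_le hx⟩

lemma bE_bounds (n : ℕ) : 0 ≤ bE n ∧ bE n ≤ 1 := by
  have h1 : 2*(n/2) ≤ n := by omega
  have h2 : n ≤ 2*(n/2) + 1 := by omega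
  have := (Nat.cast_le (α := ℝ)).2 h1
  have := (Nat.cast_le (α := ℝ)).2 h2
  unfold bE; push_cast at *; constructor <;> linarith

lemma bD_tendsto (c : ℝ) (hc : 0 < c) :
    Filter.Tendsto (fun n => bD c n / Real.sqrt n) atTop (nhds (c/2)) := by
  have hlo : Filter.Tendsto (fun n : ℕ => c/2 - 1/Real.sqrt n) atTop (nhds (c/2)) := by
    simpa using (tendsto_const_nhds (x := c/2)).sub inv_sqrt_tendsto
  have hhi : Filter.Tendsto (fun n : ℕ => c/2 + 1/Real.sqrt n) atTop (nhds (c/2)) := by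
    simpa using (tendsto_const_nhds (x := c/2)).add inv_sqrt_tendsto
  refine tendsto_of_tendsto_of_tendsto_of_le_of_le' hlo hhi ?_ ?_
  · filter_upwards [eventually_ge_atTop 1] with n hn
    have hs : 0 < Real.sqrt n := Real.sqrt_pos.2 (by exact_mod_cast Nat.pos_of_ne_zero (by omega))
    have h1 := (bK_bounds c hc n).1
    have h2 := (bM_le n).1
    have hD : (c/2) * Real.sqrt n - 1 ≤ bD c n := by unfold bD; linarith
    rw [le_div_iff₀ hs]
    have : (c/2 - 1/Real.sqrt n) * Real.sqrt n = c/2*Real.sqrt n - 1 := by field_simp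
    rw [this]; exact hD
  · filter_upwards [eventually_ge_atTop 1] with n hn
    have hs : 0 < Real.sqrt n := Real.sqrt_pos.2 (by exact_mod_cast Nat.pos_of_ne_zero (by omega))
    have h1 := (bK_bounds c hc n).2
    have h2 := (bM_le n).2
    have hD : bD c n ≤ (c/2) * Real.sqrt n + 1 := by unfold bD; linarith
    rw [div_le_iff₀ hs]
    have : (c/2 + 1/Real.sqrt n) * Real.sqrt n = c/2*Real.sqrt n + 1 := by field_simp
    rw [this]; exact hD

lemma bE_div_tendsto : Filter.Tendsto (fun n : ℕ => bE n / Real.sqrt n) atTop (nhds 0) := by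
  refine tendsto_of_tendsto_of_tendsto_of_le_of_le' tendsto_const_nhds inv_sqrt_tendsto ?_ ?_
  · filter_upwards with n
    have := (bE_bounds n).1
    positivity
  · filter_upwards [eventually_ge_atTop 1] with n hn
    have hs : 0 < Real.sqrt n := Real.sqrt_pos.2 (by exact_mod_cast Nat.pos_of_ne_zero (by omega))
    have h1 := (bE_bounds n).2
    gcongr

lemma bT_tendsto (c : ℝ) (hc : 0 < c) :
    Filter.Tendsto (fun n : ℕ => bT c n / n) atTop (nhds (c^2/4)) := by
  have h := ((bD_tendsto c hc).mul ((bD_tendsto c hc).sub bE_div_tendsto))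
  have h2 : Filter.Tendsto (fun n : ℕ => (bD c n / Real.sqrt n) * (bD c n / Real.sqrt n - bE n / Real.sqrt n)) atTop (nhds (c^2/4)) := by
    have he : c^2/4 = (c/2)*(c/2 - 0) := by ring
    rw [he]; exact h
  refine h2.congr' ?_
  filter_upwards [eventually_ge_atTop 1] with n hn
  have hs : 0 < Real.sqrt n := Real.sqrt_pos.2 (by exact_mod_cast Nat.pos_of_ne_zero (by omega))
  have hn2 : (n:ℝ) = Real.sqrt n * Real.sqrt n := (Real.mul_self_sqrt (by positivity)).symm
  unfold bT
  rw [hn2]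
  field_simp
  rw [Real.sqrt_sq hs.le]

lemma x_div_eq (c : ℝ) (n : ℕ) (hn : 1 ≤ n) :
    ((n:ℝ)/2 + (c/2)*Real.sqrt n)/n = 1/2 + (c/2)*(1/Real.sqrt n) := by
  have hs : 0 < Real.sqrt n := Real.sqrt_pos.2 (by exact_mod_cast Nat.pos_of_ne_zero (by omega))
  have hn2 : (n:ℝ) = Real.sqrt n * Real.sqrt n := (Real.mul_self_sqrt (by positivity)).symm
  rw [hn2]
  field_simp
  linear_combination (c * (Real.sqrt (Real.sqrt n ^ 2) + Real.sqrt n)) * Real.sqrt_sq hs.le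

lemma bK_div_tendsto (c : ℝ) (hc : 0 < c) :
    Filter.Tendsto (fun n : ℕ => (bK c n : ℝ) / n) atTop (nhds (1/2)) := by
  have hlo : Filter.Tendsto (fun n : ℕ => 1/2 + (c/2)*(1/Real.sqrt n) - 1/(n:ℝ)) atTop (nhds (1/2)) := by
    have := ((tendsto_const_nhds (x := (1:ℝ)/2)).add
      ((tendsto_const_nhds (x := c/2)).mul inv_sqrt_tendsto)).sub tendsto_one_div_atTop_nhds_zero_nat
    simpa using this
  have hhi : Filter.Tendsto (fun n : ℕ => 1/2 + (c/2)*(1/Real.sqrt n)) atTop (nhds (1/2)) := by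
    have := (tendsto_const_nhds (x := (1:ℝ)/2)).add
      ((tendsto_const_nhds (x := c/2)).mul inv_sqrt_tendsto)
    simpa using this
  refine tendsto_of_tendsto_of_tendsto_of_le_of_le' hlo hhi ?_ ?_
  · filter_upwards [eventually_ge_atTop 1] with n hn
    have hn0 : (0:ℝ) < n := by exact_mod_cast Nat.pos_of_ne_zero (by omega)
    rw [← x_div_eq c n hn, ← sub_div]
    have h1 := (bK_bounds c hc n).1
    gcongr
  · filter_upwards [eventually_ge_atTop 1] with n hn
    have hn0 : (0:ℝ) < n := by exact_mod_cast Nat.pos_of_ne_zero (by omega)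
    rw [← x_div_eq c n hn]
    have h1 := (bK_bounds c hc n).2
    gcongr

lemma bKc_div_tendsto (c : ℝ) (hc : 0 < c) :
    Filter.Tendsto (fun n : ℕ => ((n:ℝ) + 1 - (bK c n : ℝ)) / n) atTop (nhds (1/2)) := by
  have h : Filter.Tendsto (fun n : ℕ => 1 + 1/(n:ℝ) - (bK c n : ℝ)/n) atTop (nhds (1/2)) := by
    have := ((tendsto_const_nhds (x := (1:ℝ))).add tendsto_one_div_atTop_nhds_zero_nat).sub
      (bK_div_tendsto c hc)
    have he : (1:ℝ)/2 = 1 + 0 - 1/2 := by norm_num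
    rw [he]; exact this
  refine h.congr' ?_
  filter_upwards [eventually_ge_atTop 1] with n hn
  have hn0 : (n:ℝ) ≠ 0 := by
    have : (0:ℝ) < n := by exact_mod_cast Nat.pos_of_ne_zero (by omega)
    linarith
  field_simp

lemma nhalf_le_bK (c : ℝ) (hc : 0 < c) (n : ℕ) : n/2 ≤ bK c n := by
  have h0 : ⌊(n:ℝ)/2⌋₊ = n/2 := by
    rw [show ((2:ℝ)) = ((2:ℕ):ℝ) by norm_num, Nat.floor_div_natCast, Nat.floor_natCast]
  rw [← h0]
  apply Nat.floor_le_floor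
  have : 0 ≤ (c/2)*Real.sqrt n := by positivity
  linarith

lemma bK_le (c : ℝ) (hc : 0 < c) (n : ℕ) (hn : c^2 ≤ (n:ℝ)) : bK c n ≤ n := by
  have hsn : c ≤ Real.sqrt n := by
    rw [show c = Real.sqrt (c^2) by rw [Real.sqrt_sq hc.le]]
    exact Real.sqrt_le_sqrt hn
  have h2 : Real.sqrt n * Real.sqrt n = n := Real.mul_self_sqrt (by positivity)
  have hx : (n:ℝ)/2 + (c/2)*Real.sqrt n ≤ n := by nlinarith [Real.sqrt_nonneg (n:ℝ)]
  calc bK c n ≤ ⌊(n:ℝ)⌋₊ := Nat.floor_le_floor hx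
    _ = n := Nat.floor_natCast n

lemma bS_bounds (c : ℝ) (hc : 0 < c) (n : ℕ) (hn : 2 ≤ n) (hc2 : c^2 ≤ (n:ℝ)) :
    -(bT c n / ((n:ℝ)+1-(bK c n : ℝ))) ≤ bS c n ∧ bS c n ≤ -(bT c n / (bK c n : ℝ)) := by
  set m := n/2 with hm
  set k := bK c n with hk
  have hbS : bS c n = ∑ j ∈ Finset.Ioc m k, Real.log (((n:ℝ)+1-j)/j) := rfl
  have hmk : m ≤ k := nhalf_le_bK c hc n
  have hkn : k ≤ n := bK_le c hc n hc2
  have hm1 : 1 ≤ m := by omega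
  have hk1 : 1 ≤ k := le_trans hm1 hmk
  have hkR : (0:ℝ) < k := by exact_mod_cast hk1
  have hnkR : (0:ℝ) < (n:ℝ)+1-k := by
    have : (k:ℝ) ≤ n := by exact_mod_cast hkn
    linarith
  have hTsum : ∑ j ∈ Finset.Ioc m k, (2*(j:ℝ) - n - 1) = bT c n := by
    rw [sum_T n m k hmk]
    unfold bT bD bE
    rw [← hk, ← hm]
    ring
  have hjfacts : ∀ j ∈ Finset.Ioc m k, (0:ℝ) < j ∧ (0:ℝ) < (n:ℝ)+1-j ∧ 0 ≤ 2*(j:ℝ)-n-1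
      ∧ (j:ℝ) ≤ k ∧ (n:ℝ)+1-k ≤ (n:ℝ)+1-j := by
    intro j hj
    obtain ⟨hj1, hj2⟩ := Finset.mem_Ioc.1 hj
    have hj2n : j ≤ n := le_trans hj2 hkn
    have h2j : n + 1 ≤ 2*j := by omega
    have c1 : (0:ℝ) < j := by exact_mod_cast by omega
    have c4 : (j:ℝ) ≤ k := by exact_mod_cast hj2
    have c2 : (0:ℝ) < (n:ℝ)+1-j := by
      have : (j:ℝ) ≤ n := by exact_mod_cast hj2n
      linarith
    have c3 : 0 ≤ 2*(j:ℝ)-n-1 := by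
      have : (n:ℝ) + 1 ≤ 2*j := by exact_mod_cast h2j
      linarith
    exact ⟨c1, c2, c3, c4, by linarith⟩
  constructor
  · have hstep : ∀ j ∈ Finset.Ioc m k,
        -((2*(j:ℝ)-n-1)/((n:ℝ)+1-k)) ≤ Real.log (((n:ℝ)+1-j)/j) := by
      intro j hj
      obtain ⟨c1, c2, c3, c4, c5⟩ := hjfacts j hj
      have hf : (0:ℝ) < ((n:ℝ)+1-j)/j := by positivity
      have h1 : 1 - 1/(((n:ℝ)+1-j)/j) = -((2*(j:ℝ)-n-1)/((n:ℝ)+1-j)) := by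
        rw [one_div_div]
        field_simp
        ring
      have h2 := one_sub_inv_le_log hf
      have h3 : (2*(j:ℝ)-n-1)/((n:ℝ)+1-j) ≤ (2*(j:ℝ)-n-1)/((n:ℝ)+1-k) :=
        div_le_div_of_nonneg_left c3 hnkR c5
      rw [h1] at h2
      linarith
    calc -(bT c n/((n:ℝ)+1-k)) = ∑ j ∈ Finset.Ioc m k, -((2*(j:ℝ)-n-1)/((n:ℝ)+1-k)) := by
          rw [Finset.sum_neg_distrib, ← Finset.sum_div, hTsum]
      _ ≤ bS c n := hbS ▸ Finset.sum_le_sum hstep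
  · have hstep : ∀ j ∈ Finset.Ioc m k,
        Real.log (((n:ℝ)+1-j)/j) ≤ -((2*(j:ℝ)-n-1)/(k:ℝ)) := by
      intro j hj
      obtain ⟨c1, c2, c3, c4, c5⟩ := hjfacts j hj
      have hf : (0:ℝ) < ((n:ℝ)+1-j)/j := by positivity
      have h1 : ((n:ℝ)+1-j)/j - 1 = -((2*(j:ℝ)-n-1)/(j:ℝ)) := by
        field_simp
        ring
      have h2 := Real.log_le_sub_one_of_pos hf
      have h3 : (2*(j:ℝ)-n-1)/(k:ℝ) ≤ (2*(j:ℝ)-n-1)/(j:ℝ) :=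
        div_le_div_of_nonneg_left c3 c1 c4
      rw [h1] at h2
      linarith
    calc bS c n ≤ ∑ j ∈ Finset.Ioc m k, -((2*(j:ℝ)-n-1)/(k:ℝ)) := hbS ▸ Finset.sum_le_sum hstep
      _ = -(bT c n/(k:ℝ)) := by rw [Finset.sum_neg_distrib, ← Finset.sum_div, hTsum]

end Aux

/-- For every `c > 0`, `C(n, ⌊n/2 + (c/2)√n⌋) / C(n, ⌊n/2⌋) → exp(−c²/2)` as `n → ∞`. -/
theorem binomial_ratio_tendsto (c : ℝ) (hc : 0 < c) :
    Filter.Tendsto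
      (fun n : ℕ =>
        ((n.choose ⌊(n : ℝ) / 2 + (c / 2) * Real.sqrt n⌋₊ : ℝ)) / (n.choose (n / 2) : ℝ))
      Filter.atTop (nhds (Real.exp (-c ^ 2 / 2))) := by
  have hc2ev : ∀ᶠ n : ℕ in atTop, c^2 ≤ (n:ℝ) :=
    tendsto_natCast_atTop_atTop.eventually_ge_atTop _
  have hL : Filter.Tendsto (fun n : ℕ => -(bT c n / ((n:ℝ)+1-(bK c n : ℝ)))) atTop
      (nhds (-c^2/2)) := by
    have h := ((bT_tendsto c hc).div (bKc_div_tendsto c hc) (by norm_num)).neg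
    have he : -(c^2/4/(1/2)) = -c^2/2 := by ring
    rw [he] at h
    refine h.congr' ?_
    filter_upwards [eventually_ge_atTop 2, hc2ev] with n hn hcn
    have hn0 : (n:ℝ) ≠ 0 := by
      have : (0:ℝ) < n := by exact_mod_cast Nat.pos_of_ne_zero (by omega)
      linarith
    have hkn : bK c n ≤ n := bK_le c hc n hcn
    have hnk : ((n:ℝ)+1-(bK c n : ℝ)) ≠ 0 := by
      have : ((bK c n : ℕ):ℝ) ≤ n := by exact_mod_cast hkn
      linarith
    rw [neg_inj]
    simp only [Pi.div_apply]
    field_simp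
  have hU : Filter.Tendsto (fun n : ℕ => -(bT c n / (bK c n : ℝ))) atTop (nhds (-c^2/2)) := by
    have h := ((bT_tendsto c hc).div (bK_div_tendsto c hc) (by norm_num)).neg
    have he : -(c^2/4/(1/2)) = -c^2/2 := by ring
    rw [he] at h
    refine h.congr' ?_
    filter_upwards [eventually_ge_atTop 2] with n hn
    have hn0 : (n:ℝ) ≠ 0 := by
      have : (0:ℝ) < n := by exact_mod_cast Nat.pos_of_ne_zero (by omega)
      linarith
    have hk1 : 1 ≤ bK c n := le_trans (by omega) (nhalf_le_bK c hc n)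
    have hkne : ((bK c n : ℕ):ℝ) ≠ 0 := by
      have : (0:ℝ) < ((bK c n : ℕ):ℝ) := by exact_mod_cast hk1
      linarith
    rw [neg_inj]
    simp only [Pi.div_apply]
    field_simp
  have hS : Filter.Tendsto (fun n : ℕ => bS c n) atTop (nhds (-c^2/2)) := by
    refine tendsto_of_tendsto_of_tendsto_of_le_of_le' hL hU ?_ ?_
    · filter_upwards [eventually_ge_atTop 2, hc2ev] with n hn hcn
      exact (bS_bounds c hc n hn hcn).1
    · filter_upwards [eventually_ge_atTop 2, hc2ev] with n hn hcn
      exact (bS_bounds c hc n hn hcn).2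
  have hexp : Filter.Tendsto (fun n : ℕ => Real.exp (bS c n)) atTop
      (nhds (Real.exp (-c^2/2))) := (Real.continuous_exp.tendsto _).comp hS
  refine hexp.congr' ?_
  filter_upwards [eventually_ge_atTop 2, hc2ev] with n hn hcn
  show Real.exp (bS c n) = (n.choose (bK c n) : ℝ) / (n.choose (n/2) : ℝ)
  have hmk : n/2 ≤ bK c n := nhalf_le_bK c hc n
  have hkn : bK c n ≤ n := bK_le c hc n hcn
  have hch : (n.choose (n/2) : ℝ) ≠ 0 := by
    have := Nat.choose_pos (Nat.div_le_self n 2)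
    positivity
  rw [choose_prod_formula n (n/2) (bK c n) hmk hkn, mul_div_cancel_left₀ _ hch]
  rw [bS, Real.exp_sum]
  apply Finset.prod_congr rfl
  intro j hj
  obtain ⟨hj1, hj2⟩ := Finset.mem_Ioc.1 hj
  have hj0 : (0:ℝ) < j := by exact_mod_cast by omega
  have hjn : (0:ℝ) < (n:ℝ)+1-j := by
    have : (j:ℝ) ≤ n := by exact_mod_cast le_trans hj2 hkn
    linarith
  exact Real.exp_log (by positivity)
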